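/- Let m, k be integers with m ≥ 5 and 1 ≤ k ≤ ⌊(m-1)/2⌋. Then 3^{m-1} - 2^k·C(m-1, k) - Σ_{j=0}^{k} 2^j·C(m, j) > 0. -/

import Mathlib

open Finset

private lemma refl_ge {n i : ℕ} (h : i + i < n) :
    2 * (2 ^ i * n.choose i) ≤ 2 ^ (n - i) * n.choose (n - i) := by
  rw [Nat.choose_symm (by omega)]
  have e : 2 ^ (n - i) = 2 ^ (n - i - i) * 2 ^ i := by
    rw [← pow_add]; congr 1; omega
  rw [e, mul_assoc]
  have h2 : 2 ≤ 2 ^ (n - i - i) := by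
    calc 2 = 2 ^ 1 := rfl
    _ ≤ 2 ^ (n - i - i) := Nat.pow_le_pow_right (by norm_num) (by omega)
  exact Nat.mul_le_mul_right _ h2

private lemma refl_eq {n i : ℕ} (h : i + i ≤ n) :
    2 ^ (n - i) * n.choose (n - i) = 2 ^ (n - i - i) * (2 ^ i * n.choose i) := by
  rw [Nat.choose_symm (by omega), ← mul_assoc, ← pow_add]
  congr 2
  omega

/-- For `m ≥ 5` and `1 ≤ k ≤ ⌊(m-1)/2⌋`,
`3^{m-1} - 2^k·C(m-1,k) - Σ_{j=0}^{k} 2^j·C(m,j) > 0`. -/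
theorem stmt_1 (m k : ℕ) (hm : 5 ≤ m) (hk1 : 1 ≤ k) (hk : k ≤ (m - 1) / 2) :
    0 < (3 : ℤ) ^ (m - 1) - 2 ^ k * ((m - 1).choose k : ℤ)
        - ∑ j ∈ Finset.range (k + 1), 2 ^ j * (m.choose j : ℤ) := by
  obtain ⟨n, rfl⟩ : ∃ n, m = n + 1 := ⟨m - 1, by omega⟩
  have hn : 4 ≤ n := by omega
  have hk2 : 2 * k ≤ n := by omega
  set t : ℕ → ℕ := fun j => 2 ^ j * n.choose j with ht
  -- the key natural-number inequality
  have key : 2 ^ k * n.choose k + ∑ j ∈ range (k + 1), 2 ^ j * (n + 1).choose j < 3 ^ n := by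
    -- Pascal expansion of the sum
    have pascal : ∀ K, ∑ j ∈ range (K + 1), 2 ^ j * (n + 1).choose j
        = ∑ j ∈ range (K + 1), t j + 2 * ∑ j ∈ range K, t j := by
      intro K
      induction K with
      | zero => simp [ht]
      | succ K ih =>
        rw [sum_range_succ, ih, Nat.choose_succ_succ',
          sum_range_succ (fun j => t j) (K + 1), sum_range_succ (fun j => t j) K]
        simp only [ht]
        ring
    -- binomial theorem
    have hbin : 3 ^ n = ∑ j ∈ range (n + 1), t j := by
      have h3 : (3 : ℕ) = 2 + 1 := rfl
      rw [h3, add_pow]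
      simp [ht]
    -- split the full sum
    have esplit : n + 1 = (k + 1) + (n - k) := by omega
    have hsplit : ∑ j ∈ range (n + 1), t j
        = ∑ j ∈ range (k + 1), t j + ∑ i ∈ range (n - k), t (k + 1 + i) := by
      rw [esplit, Finset.sum_range_add]
    -- reflect the tail
    have hrefl : ∑ i ∈ range (n - k), t (k + 1 + i) = ∑ i ∈ range (n - k), t (n - i) := by
      rw [← Finset.sum_range_reflect]
      apply Finset.sum_congr rfl
      intro i hi
      simp only [mem_range] at hi
      congr 1
      omega
    rw [pascal, hbin, hsplit, hrefl]
    have htk : 2 ^ k * n.choose k = t k := rfl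
    rw [htk]
    have goal' : t k + 2 * ∑ j ∈ range k, t j < ∑ i ∈ range (n - k), t (n - i) := by
      rcases lt_or_eq_of_le hk2 with hlt | heq
      · -- case A : 2k < n
        have hsub : ∑ i ∈ range (k + 1), t (n - i) ≤ ∑ i ∈ range (n - k), t (n - i) :=
          Finset.sum_le_sum_of_subset (by
            intro x hx; simp only [mem_range] at *; omega)
        refine lt_of_lt_of_le ?_ hsub
        rw [sum_range_succ]
        have h1 : 2 * ∑ j ∈ range k, t j ≤ ∑ i ∈ range k, t (n - i) := by
          rw [Finset.mul_sum]
          refine Finset.sum_le_sum fun i hi => ?_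
          simp only [mem_range] at hi
          exact refl_ge (by omega)
        have hpos : 0 < t k := Nat.mul_pos (Nat.pow_pos (by norm_num))
          (Nat.choose_pos (by omega))
        have h2 : t k < t (n - k) :=
          lt_of_lt_of_le (by omega) (refl_ge (n := n) (i := k) (by omega))
        omega
      · -- case B : n = 2k
        have hkk : 2 ≤ k := by omega
        have hnk : n - k = k := by omega
        rw [hnk]
        have e1 : n - (k - 2) = k + 2 := by omega
        have e2 : n - (k - 1) = k + 1 := by omega
        have split3 : ∀ f : ℕ → ℕ,
            ∑ i ∈ range k, f i = ∑ i ∈ range (k - 2), f i + f (k - 2) + f (k - 1) := by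
          intro f
          have ek : k = (k - 2) + 1 + 1 := by omega
          conv_lhs => rw [ek]
          rw [sum_range_succ, sum_range_succ, show k - 2 + 1 = k - 1 from by omega]
        rw [split3 (fun i => t (n - i)), split3 t, e1, e2]
        have h1 : 2 * ∑ j ∈ range (k - 2), t j ≤ ∑ i ∈ range (k - 2), t (n - i) := by
          rw [Finset.mul_sum]
          refine Finset.sum_le_sum fun i hi => ?_
          simp only [mem_range] at hi
          exact refl_ge (by omega)
        -- t (k+2) = 16 * t (k-2), t (k+1) = 4 * t (k-1)
        have eq1 : t (k + 2) = 16 * t (k - 2) := by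
          have h := refl_eq (n := n) (i := k - 2) (by omega)
          rw [e1, show k + 2 - (k - 2) = 4 from by omega] at h
          simp only [ht] at h ⊢
          rw [h]; norm_num
        have eq2 : t (k + 1) = 4 * t (k - 1) := by
          have h := refl_eq (n := n) (i := k - 1) (by omega)
          rw [e2, show k + 1 - (k - 1) = 2 from by omega] at h
          simp only [ht] at h ⊢
          rw [h]; norm_num
        -- ratio identities
        have r1 : t k * k = 2 * (k + 1) * t (k - 1) := by
          have h := Nat.choose_succ_right_eq n (k - 1)
          rw [show k - 1 + 1 = k from by omega, e2] at h
          simp only [ht]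
          have e4 : (2:ℕ) ^ k = 2 * 2 ^ (k - 1) := by
            conv_lhs => rw [show k = (k - 1) + 1 from by omega]
            ring
          calc 2 ^ k * n.choose k * k = 2 * 2 ^ (k-1) * (n.choose k * k) := by rw [e4]; ring
          _ = 2 * 2 ^ (k-1) * (n.choose (k-1) * (k+1)) := by rw [h]
          _ = 2 * (k + 1) * (2 ^ (k-1) * n.choose (k-1)) := by ring
        have r2 : t (k - 1) * (k - 1) = 2 * (k + 2) * t (k - 2) := by
          have h := Nat.choose_succ_right_eq n (k - 2)
          rw [show k - 2 + 1 = k - 1 from by omega, e1] at h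
          simp only [ht]
          have e4 : (2:ℕ) ^ (k - 1) = 2 * 2 ^ (k - 2) := by
            conv_lhs => rw [show k - 1 = (k - 2) + 1 from by omega]
            ring
          calc 2 ^ (k-1) * n.choose (k-1) * (k-1)
              = 2 * 2 ^ (k-2) * (n.choose (k-1) * (k-1)) := by rw [e4]; ring
          _ = 2 * 2 ^ (k-2) * (n.choose (k-2) * (k+2)) := by rw [h]
          _ = 2 * (k + 2) * (2 ^ (k-2) * n.choose (k-2)) := by ring
        have ha : 1 ≤ t (k - 2) := by
          have : 0 < t (k - 2) := Nat.mul_pos (Nat.pow_pos (by norm_num))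
            (Nat.choose_pos (by omega))
          omega
        have hb : t (k - 1) < 14 * t (k - 2) := by
          have h14 : t (k - 1) * (k - 1) < 14 * t (k - 2) * (k - 1) := by
            rw [r2]
            calc 2 * (k + 2) * t (k - 2) < 14 * (k - 1) * t (k - 2) :=
              Nat.mul_lt_mul_of_lt_of_le (by omega) (le_refl _) (by omega)
            _ = 14 * t (k - 2) * (k - 1) := by ring
          exact Nat.lt_of_mul_lt_mul_right h14
        have hc : t k ≤ 3 * t (k - 1) := by
          have h3 : t k * k ≤ 3 * t (k - 1) * k := by
            rw [r1]
            calc 2 * (k + 1) * t (k-1) ≤ 3 * k * t (k-1) :=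
              Nat.mul_le_mul_right _ (by omega)
            _ = 3 * t (k-1) * k := by ring
          exact Nat.le_of_mul_le_mul_right h3 (by omega)
        omega
    omega
  -- conclude over ℤ
  have h2 : ((2 ^ k * n.choose k + ∑ j ∈ range (k + 1), 2 ^ j * (n + 1).choose j : ℕ) : ℤ)
      < ((3 ^ n : ℕ) : ℤ) := by exact_mod_cast key
  push_cast at h2
  simp only [Nat.add_sub_cancel]
  linarith
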